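/- Let (𝒜, ℬ, 𝒞) be a recollement of abelian categories such that ℬ has enough projectives and injectives, and let m ≥ 1 be an integer. For B in ℬ let H(B) denote the kernel of the unit η_B : B → i(q(B)) of the adjunction (q, i) (this unit is an epimorphism for every B). Then the following are equivalent: (i) pd_ℬ i(P) ≤ m for every projective object P of 𝒜; (ii) for every projective object P of ℬ, pd_ℬ H(P) ≤ m − 1. -/

import Mathlib

/-!
A recollement `(𝒜, ℬ, 𝒞)` of abelian categories consists of functors `i : 𝒜 ⥤ ℬ`,
`e : ℬ ⥤ 𝒞`, `q, p : ℬ ⥤ 𝒜` and `l, r : 𝒞 ⥤ ℬ` such that `(l, e)`, `(e, r)`, `(q, i)`,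
`(i, p)` are adjoint pairs, the functors `i`, `l` and `r` are fully faithful, and the
essential image of `i` equals the kernel of `e`.

For `B ∈ ℬ` let `H(B)` be the kernel of the unit `η_B : B → i(q(B))` of the adjunction
`(q, i)` (this unit is an epimorphism for every `B`).

STATEMENT: suppose `ℬ` has enough projectives and injectives and let `m ≥ 1`.  Then the
following are equivalent: (i) `pd_ℬ i(P) ≤ m` for every projective `P` of `𝒜`;
(ii) `pd_ℬ H(P) ≤ m - 1` for every projective `P` of `ℬ`.
-/

open CategoryTheory CategoryTheory.Limits

universe w v₁ v₂ v₃ u₁ u₂ u₃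

/-- A recollement `(𝒜, ℬ, 𝒞)` of abelian categories. -/
structure Recollement (A : Type u₁) (B : Type u₂) (C : Type u₃)
    [Category.{v₁} A] [Category.{v₂} B] [Category.{v₃} C]
    [Abelian A] [Abelian B] [Abelian C] where
  /-- the inclusion functor -/
  i : A ⥤ B
  /-- the quotient functor -/
  e : B ⥤ C
  /-- the left adjoint of `i` -/
  q : B ⥤ A
  /-- the right adjoint of `i` -/
  p : B ⥤ A
  /-- the left adjoint of `e` -/
  l : C ⥤ B
  /-- the right adjoint of `e` -/
  r : C ⥤ B
  /-- `(l, e)` is an adjoint pair -/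
  adj_le : l ⊣ e
  /-- `(e, r)` is an adjoint pair -/
  adj_er : e ⊣ r
  /-- `(q, i)` is an adjoint pair -/
  adj_qi : q ⊣ i
  /-- `(i, p)` is an adjoint pair -/
  adj_ip : i ⊣ p
  i_full : i.Full
  i_faithful : i.Faithful
  l_full : l.Full
  l_faithful : l.Faithful
  r_full : r.Full
  r_faithful : r.Faithful
  /-- the essential image of `i` is the kernel of `e` -/
  essImage_i_eq_ker_e : ∀ X : B, i.essImage X ↔ IsZero (e.obj X)

/-- The projective dimension of an object of an abelian category, as an element of `ℕ∞`:
the least `n` such that `X` admits a projective resolution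
`0 → P_n → ⋯ → P_0 → X → 0` (and `⊤` if there is no such `n`). -/
noncomputable def projDim {C : Type u₁} [Category.{v₁} C] [Abelian C] (X : C) : ℕ∞ :=
  ⨅ (n : ℕ) (_ : ∃ P : CategoryTheory.ProjectiveResolution X,
    ∀ k, n < k → IsZero (P.complex.X k)), (n : ℕ∞)

/-- The injective dimension of an object of an abelian category, as an element of `ℕ∞`:
the least `n` such that `X` admits an injective coresolution
`0 → X → I^0 → ⋯ → I^n → 0` (and `⊤` if there is no such `n`). -/
noncomputable def injDim {C : Type u₁} [Category.{v₁} C] [Abelian C] (X : C) : ℕ∞ :=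
  ⨅ (n : ℕ) (_ : ∃ I : CategoryTheory.InjectiveResolution X,
    ∀ k, n < k → IsZero (I.cocomplex.X k)), (n : ℕ∞)

/-- The finitistic projective dimension of an abelian category: the supremum of the
projective dimensions of the objects having finite projective dimension. -/
noncomputable def catFindim (C : Type u₁) [Category.{v₁} C] [Abelian C] : ℕ∞ :=
  ⨆ (X : C) (_ : projDim X ≠ ⊤), projDim X

/-- An object of an abelian category has finite length if it admits a finite filtration
`⊥ = X_0 < X_1 < ⋯ < X_n = ⊤` by subobjects whose successive quotients are simple
(a finite composition series). -/
def FiniteLengthObj {C : Type u₁} [Category.{v₁} C] [Abelian C] (X : C) : Prop :=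
  ∃ (n : ℕ) (f : Fin (n + 1) → Subobject X), f 0 = ⊥ ∧ f (Fin.last n) = ⊤ ∧
    ∀ j : Fin n, ∃ h : f j.castSucc ≤ f j.succ,
      Simple (cokernel (Subobject.ofLE (f j.castSucc) (f j.succ) h))

/-- An abelian category is a finite length category if every object has a finite
composition series. -/
def FiniteLengthCategory (C : Type u₁) [Category.{v₁} C] [Abelian C] : Prop :=
  ∀ X : C, FiniteLengthObj X

/-- An abelian category has projective covers if every object `X` admits an epimorphism
`f : P → X` with `P` projective whose kernel is superfluous, i.e. contained in the radical
of `P` (the intersection of all maximal subobjects of `P`). -/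
def HasProjectiveCovers (C : Type u₁) [Category.{v₁} C] [Abelian C] : Prop :=
  ∀ X : C, ∃ (P : C) (_ : Projective P) (f : P ⟶ X), Epi f ∧
    ∀ m : Subobject P, IsCoatom m → kernelSubobject f ≤ m


namespace PdAux

variable {D : Type u₁} [Category.{v₁} D] [Abelian D]

/-- `X` admits a projective resolution of length `≤ m`. -/
def ResLen (X : D) (m : ℕ) : Prop :=
  ∃ P : CategoryTheory.ProjectiveResolution X, ∀ k, m < k → IsZero (P.complex.X k)

lemma ResLen.mono {X : D} {m m' : ℕ} (h : m ≤ m') (hX : ResLen X m) : ResLen X m' := by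
  obtain ⟨P, hP⟩ := hX
  exact ⟨P, fun k hk => hP k (lt_of_le_of_lt h hk)⟩

lemma projDim_le_iff {X : D} {m : ℕ} : projDim X ≤ (m : ℕ∞) ↔ ResLen X m := by
  constructor
  · intro h
    by_contra hc
    have key : ((m + 1 : ℕ) : ℕ∞) ≤ projDim X := by
      rw [projDim]
      refine le_iInf fun n => le_iInf fun hn => ?_
      rw [Nat.cast_le]
      by_contra h'
      exact hc ((ResLen.mono (by omega) (hn : ResLen X n)))
    have := le_trans key h
    rw [Nat.cast_le] at this
    omega
  · intro h
    rw [projDim]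
    exact iInf₂_le m h

lemma resLen_of_projective (X : D) [Projective X] (m : ℕ) : ResLen X m :=
  ⟨CategoryTheory.ProjectiveResolution.self X, fun k hk =>
    HomologicalComplex.isZero_single_obj_X _ 0 X k (by omega)⟩

lemma projective_of_retract {X Y : D} (s : X ⟶ Y) (r : Y ⟶ X) (h : s ≫ r = 𝟙 X)
    (hY : Projective Y) : Projective X := by
  constructor
  intro E Z f e he
  exact ⟨s ≫ Projective.factorThru (r ≫ f) e, by
    rw [Category.assoc, Projective.factorThru_comp, ← Category.assoc, h, Category.id_comp]⟩

/-- The augmentation map of a projective resolution, with codomain `Z` itself. -/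
noncomputable def aug {Z : D} (Q : CategoryTheory.ProjectiveResolution Z) :
    Q.complex.X 0 ⟶ Z :=
  ((ChainComplex.toSingle₀Equiv Q.complex Z) Q.π).1

lemma d_aug {Z : D} (Q : CategoryTheory.ProjectiveResolution Z) :
    Q.complex.d 1 0 ≫ aug Q = 0 :=
  ((ChainComplex.toSingle₀Equiv Q.complex Z) Q.π).2

lemma epi_aug {Z : D} (Q : CategoryTheory.ProjectiveResolution Z) : Epi (aug Q) :=
  inferInstanceAs (Epi (Q.π.f 0))

lemma exact_aug {Z : D} (Q : CategoryTheory.ProjectiveResolution Z) :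
    (ShortComplex.mk (Q.complex.d 1 0) (aug Q) (d_aug Q)).Exact :=
  Q.exact₀

/-- Constructor for projective resolutions from an exact complex. -/
noncomputable def mkRes {Z : D} (P : ChainComplex D ℕ)
    (hproj : ∀ n, Projective (P.X n))
    (π₀ : P.X 0 ⟶ Z) (hd : P.d 1 0 ≫ π₀ = 0) (hepi : Epi π₀)
    (hex0 : (ShortComplex.mk (P.d 1 0) π₀ hd).Exact)
    (hex : ∀ n, P.ExactAt (n + 1)) : CategoryTheory.ProjectiveResolution Z where
  complex := P
  projective := hproj
  π := (ChainComplex.toSingle₀Equiv _ _).symm ⟨π₀, hd⟩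
  quasiIso := ⟨fun n => by
    cases n with
    | zero =>
      rw [ChainComplex.quasiIsoAt₀_iff, ShortComplex.quasiIso_iff_of_zeros']
      · refine (ShortComplex.exact_and_epi_g_iff_of_iso ?_).2 ⟨hex0, hepi⟩
        exact ShortComplex.isoMk (Iso.refl _) (Iso.refl _) (Iso.refl _)
          (by simp; exact (Category.id_comp _).trans (Category.comp_id _).symm) (by simp; exact (Category.id_comp _).trans (Category.comp_id _).symm)
      · exact P.shape 0 0 (by simp)
      · simp; rfl
      · simp; rfl
    | succ n =>
      rw [quasiIsoAt_iff_exactAt']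
      · exact hex n
      · apply ChainComplex.exactAt_succ_single_obj⟩

/-- The spliced complex `⋯ → Q₁ → Q₀ → P` of a resolution `Q` of `K` along `f : K ⟶ P`. -/
noncomputable def spliceComplex {K P : D} (Q : CategoryTheory.ProjectiveResolution K)
    (f : K ⟶ P) : ChainComplex D ℕ :=
  ChainComplex.of (fun k => match k with | 0 => P | (j + 1) => Q.complex.X j)
    (fun k => match k with
      | 0 => aug Q ≫ f
      | (j + 1) => Q.complex.d (j + 1) j)
    (fun k => match k with
      | 0 => by rw [← Category.assoc, d_aug, zero_comp]
      | (j + 1) => Q.complex.d_comp_d _ _ _)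

lemma spliceComplex_d0 {K P : D} (Q : CategoryTheory.ProjectiveResolution K) (f : K ⟶ P) :
    (spliceComplex Q f).d 1 0 = aug Q ≫ f :=
  by simp [spliceComplex, ChainComplex.of.d]

lemma spliceComplex_dsucc {K P : D} (Q : CategoryTheory.ProjectiveResolution K) (f : K ⟶ P)
    (j : ℕ) : (spliceComplex Q f).d (j + 2) (j + 1) = Q.complex.d (j + 1) j :=
  by simp [spliceComplex, ChainComplex.of.d]

lemma resLen_splice {K P X : D} (Q : CategoryTheory.ProjectiveResolution K) {n : ℕ}
    (hQ : ∀ k, n < k → IsZero (Q.complex.X k))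
    (f : K ⟶ P) (g : P ⟶ X) [Mono f] [Epi g] [Projective P]
    (hfg : f ≫ g = 0) (hex : (ShortComplex.mk f g hfg).Exact) :
    ResLen X (n + 1) := by
  have hd : (spliceComplex Q f).d 1 0 ≫ g = 0 := by
    rw [spliceComplex_d0]
    show (aug Q ≫ f) ≫ g = 0
    rw [Category.assoc, hfg, comp_zero]
  refine ⟨mkRes (spliceComplex Q f) ?_ g hd (inferInstanceAs (Epi g)) ?_ ?_, ?_⟩
  · intro n
    match n with
    | 0 => exact inferInstanceAs (Projective P)
    | (j + 1) => exact Q.projective j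
  · -- exactness at degree 0
    have e : (ShortComplex.mk ((spliceComplex Q f).d 1 0) g hd) ≅
        (ShortComplex.mk (aug Q ≫ f) g (by rw [Category.assoc, hfg, comp_zero])) :=
      ShortComplex.isoMk (Iso.refl _) (Iso.refl _) (Iso.refl _)
        (by simp [spliceComplex_d0]; exact (Category.id_comp _).trans (Category.comp_id _).symm) (by simp; exact (Category.id_comp _).trans (Category.comp_id _).symm)
    rw [ShortComplex.exact_iff_of_iso e]
    haveI := epi_aug Q
    exact (ShortComplex.exact_iff_of_epi_of_isIso_of_mono
      (S₁ := ShortComplex.mk (aug Q ≫ f) g (by rw [Category.assoc, hfg, comp_zero]))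
      (S₂ := ShortComplex.mk f g hfg)
      { τ₁ := aug Q, τ₂ := 𝟙 _, τ₃ := 𝟙 _ }).2 hex
  · -- exactness at positive degrees
    intro k
    rw [HomologicalComplex.exactAt_iff' _ (k + 2) (k + 1) k (by simp) (by simp)]
    match k with
    | 0 =>
      have e : (ShortComplex.mk (Q.complex.d 1 0) (aug Q ≫ f)
            (by rw [← Category.assoc, d_aug, zero_comp])) ≅
          ((spliceComplex Q f).sc' 2 1 0) :=
        ShortComplex.isoMk (Iso.refl _) (Iso.refl _) (Iso.refl _)
          (by simp [spliceComplex_dsucc]; exact (Category.id_comp _).trans (Category.comp_id _).symm) (by simp [spliceComplex_d0]; exact (Category.id_comp _).trans (Category.comp_id _).symm)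
      rw [← ShortComplex.exact_iff_of_iso e]
      exact (ShortComplex.exact_iff_of_epi_of_isIso_of_mono
        (S₁ := ShortComplex.mk (Q.complex.d 1 0) (aug Q) (d_aug Q))
        (S₂ := ShortComplex.mk (Q.complex.d 1 0) (aug Q ≫ f)
          (by rw [← Category.assoc, d_aug, zero_comp]))
        { τ₁ := 𝟙 _, τ₂ := 𝟙 _, τ₃ := f }).1 (exact_aug Q)
    | (j + 1) =>
      have e : (ShortComplex.mk (Q.complex.d (j + 2) (j + 1)) (Q.complex.d (j + 1) j)
            (Q.complex.d_comp_d _ _ _)) ≅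
          ((spliceComplex Q f).sc' (j + 3) (j + 2) (j + 1)) :=
        ShortComplex.isoMk (Iso.refl _) (Iso.refl _) (Iso.refl _)
          (by simp [spliceComplex_dsucc]; exact (Category.id_comp _).trans (Category.comp_id _).symm) (by simp [spliceComplex_dsucc]; exact (Category.id_comp _).trans (Category.comp_id _).symm)
      rw [← ShortComplex.exact_iff_of_iso e]
      exact Q.exact_succ j
  · -- vanishing
    intro k hk
    match k, hk with
    | (j + 1), hk => exact hQ j (by omega)

lemma resLen_of_kernel_ses {P X : D} (g : P ⟶ X) [Epi g] [Projective P] {n : ℕ}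
    (h : ResLen (kernel g) n) : ResLen X (n + 1) := by
  obtain ⟨Q, hQ⟩ := h
  exact resLen_splice Q hQ (kernel.ι g) g (kernel.condition g)
    (ShortComplex.exact_of_f_is_kernel _ (kernelIsKernel g))

lemma resLen_shift {X : D} (Q : CategoryTheory.ProjectiveResolution X) {n : ℕ}
    (hQ : ∀ k, n + 1 < k → IsZero (Q.complex.X k)) :
    ResLen (kernel (aug Q)) n := by
  set K' := kernel (aug Q)
  let R : ChainComplex D ℕ := ChainComplex.of (fun k => Q.complex.X (k + 1))
    (fun k => Q.complex.d (k + 2) (k + 1)) (fun k => Q.complex.d_comp_d _ _ _)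
  have hRd : ∀ j : ℕ, R.d (j + 1) j = Q.complex.d (j + 2) (j + 1) :=
    fun j => by simp [R, ChainComplex.of.d]
  let π₀ : R.X 0 ⟶ K' := kernel.lift (aug Q) (Q.complex.d 1 0) (d_aug Q)
  have hπ₀ι : π₀ ≫ kernel.ι (aug Q) = Q.complex.d 1 0 := kernel.lift_ι _ _ _
  have hd : R.d 1 0 ≫ π₀ = 0 := by
    rw [← cancel_mono (kernel.ι (aug Q)), Category.assoc, hπ₀ι, hRd, zero_comp,
      Q.complex.d_comp_d]
  have hepi : Epi π₀ := by
    have hS := exact_aug Q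
    haveI := hS.epi_toCycles
    have heq : π₀ = (ShortComplex.mk (Q.complex.d 1 0) (aug Q) (d_aug Q)).toCycles ≫
        (ShortComplex.mk (Q.complex.d 1 0) (aug Q) (d_aug Q)).cyclesIsoKernel.hom := by
      rw [← cancel_mono (kernel.ι (aug Q)), hπ₀ι]
      simp [ShortComplex.cyclesIsoKernel]
    rw [heq]
    exact epi_comp _ _
  refine ⟨mkRes R (fun k => Q.projective (k + 1)) π₀ hd hepi ?_ ?_, ?_⟩
  · have e : (ShortComplex.mk (R.d 1 0) π₀ hd) ≅
        (ShortComplex.mk (Q.complex.d 2 1) π₀ (by rw [← hRd 0]; exact hd)) :=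
      ShortComplex.isoMk (Iso.refl _) (Iso.refl _) (Iso.refl _) (by simp [hRd 0]) (by simp)
    rw [ShortComplex.exact_iff_of_iso e]
    exact (ShortComplex.exact_iff_of_epi_of_isIso_of_mono
      (S₁ := ShortComplex.mk (Q.complex.d 2 1) π₀ (by rw [← hRd 0]; exact hd))
      (S₂ := ShortComplex.mk (Q.complex.d 2 1) (Q.complex.d 1 0) (Q.complex.d_comp_d _ _ _))
      { τ₁ := 𝟙 _, τ₂ := 𝟙 _, τ₃ := kernel.ι (aug Q),
        comm₂₃ := by simpa using hπ₀ι.symm }).2 (Q.exact_succ 0)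
  · intro k
    rw [HomologicalComplex.exactAt_iff' _ (k + 2) (k + 1) k (by simp) (by simp)]
    have e : (ShortComplex.mk (Q.complex.d (k + 3) (k + 2)) (Q.complex.d (k + 2) (k + 1))
          (Q.complex.d_comp_d _ _ _)) ≅ (R.sc' (k + 2) (k + 1) k) :=
      ShortComplex.isoMk (Iso.refl _) (Iso.refl _) (Iso.refl _)
        (by simp [hRd]; exact (Category.id_comp _).trans (Category.comp_id _).symm) (by simp [hRd]; exact (Category.id_comp _).trans (Category.comp_id _).symm)
    rw [← ShortComplex.exact_iff_of_iso e]
    exact Q.exact_succ (k + 1)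
  · intro k hk
    exact hQ (k + 1) (by omega)

lemma projective_of_resLen_zero {X : D} (h : ResLen X 0) : Projective X := by
  obtain ⟨Q, hQ⟩ := h
  have hd : Q.complex.d 1 0 = 0 := (hQ 1 Nat.one_pos).eq_of_src _ _
  haveI : Mono (aug Q) := (exact_aug Q).mono_g hd
  haveI : Epi (aug Q) := epi_aug Q
  haveI : IsIso (aug Q) := isIso_of_mono_of_epi _
  exact projective_of_retract (inv (aug Q)) (aug Q) (by simp) (Q.projective 0)

lemma resLen_biprod {X P : D} [Projective P] {n : ℕ} (h : ResLen X n) :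
    ResLen (X ⊞ P) n := by
  obtain ⟨Q, hQ⟩ := h
  let R : ChainComplex D ℕ := ChainComplex.of
    (fun k => match k with | 0 => Q.complex.X 0 ⊞ P | (j + 1) => Q.complex.X (j + 1))
    (fun k => match k with
      | 0 => Q.complex.d 1 0 ≫ biprod.inl
      | (j + 1) => Q.complex.d (j + 2) (j + 1))
    (fun k => match k with
      | 0 => by rw [← Category.assoc, Q.complex.d_comp_d, zero_comp]
      | (j + 1) => Q.complex.d_comp_d _ _ _)
  have hRd0 : R.d 1 0 = Q.complex.d 1 0 ≫ biprod.inl := by simp [R, ChainComplex.of.d]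
  have hRds : ∀ j : ℕ, R.d (j + 2) (j + 1) = Q.complex.d (j + 2) (j + 1) :=
    fun j => by simp [R, ChainComplex.of.d]
  let π₀ : R.X 0 ⟶ X ⊞ P := biprod.map (aug Q) (𝟙 P)
  have hd : R.d 1 0 ≫ π₀ = 0 := by
    rw [hRd0, Category.assoc]
    simp [π₀, ← Category.assoc, d_aug]
  have hepi : Epi π₀ := by
    haveI := epi_aug Q
    constructor
    intro W u v huv
    apply biprod.hom_ext'
    · rw [← cancel_epi (aug Q)]
      have h1 := biprod.inl ≫= huv
      simpa [π₀, ← Category.assoc] using h1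
    · have h2 := biprod.inr ≫= huv
      simpa [π₀] using h2
  refine ⟨mkRes R ?_ π₀ hd hepi ?_ ?_, ?_⟩
  · intro k
    match k with
    | 0 => exact inferInstanceAs (Projective (Q.complex.X 0 ⊞ P))
    | (j + 1) => exact Q.projective (j + 1)
  · rw [ShortComplex.exact_iff_exact_up_to_refinements]
    intro T x hx
    dsimp at x hx ⊢
    have hx1 : (x ≫ biprod.fst) ≫ aug Q = 0 := by
      have := hx =≫ biprod.fst
      simpa [π₀, Category.assoc] using this
    have hx2 : x ≫ biprod.snd = 0 := by
      have := hx =≫ biprod.snd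
      simpa [π₀, Category.assoc] using this
    obtain ⟨T', π, hπ, x₁, hrel⟩ := (exact_aug Q).exact_up_to_refinements
      (x ≫ biprod.fst) hx1
    refine ⟨T', π, hπ, x₁, ?_⟩
    have hxdec : x = x ≫ biprod.fst ≫ biprod.inl := by
      apply biprod.hom_ext
      · simp
      · simp [reassoc_of% hx2, hx2]
    have hrel' : π ≫ x ≫ biprod.fst = x₁ ≫ Q.complex.d 1 0 := hrel
    rw [hRd0]
    calc π ≫ x = π ≫ (x ≫ biprod.fst ≫ biprod.inl) := by rw [← hxdec]
      _ = (π ≫ x ≫ biprod.fst) ≫ biprod.inl := by simp only [Category.assoc]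
      _ = x₁ ≫ Q.complex.d 1 0 ≫ biprod.inl := by rw [hrel', Category.assoc]
  · intro k
    rw [HomologicalComplex.exactAt_iff' _ (k + 2) (k + 1) k (by simp) (by simp)]
    match k with
    | 0 =>
      rw [← ShortComplex.exact_iff_of_iso (ShortComplex.isoMk (Iso.refl _) (Iso.refl _)
        (Iso.refl _) (by simp [hRds 0]; exact (Category.id_comp _).trans (Category.comp_id _).symm) (by simp [hRd0]; exact (Category.id_comp _).trans (Category.comp_id _).symm) :
          (ShortComplex.mk (Q.complex.d 2 1) (Q.complex.d 1 0 ≫ biprod.inl)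
            (by rw [← Category.assoc, Q.complex.d_comp_d, zero_comp])) ≅ (R.sc' 2 1 0))]
      exact (ShortComplex.exact_iff_of_epi_of_isIso_of_mono
        (S₁ := ShortComplex.mk (Q.complex.d 2 1) (Q.complex.d 1 0) (Q.complex.d_comp_d _ _ _))
        (S₂ := ShortComplex.mk (Q.complex.d 2 1) (Q.complex.d 1 0 ≫ biprod.inl)
          (by rw [← Category.assoc, Q.complex.d_comp_d, zero_comp]))
        { τ₁ := 𝟙 _, τ₂ := 𝟙 _, τ₃ := biprod.inl }).1 (Q.exact_succ 0)
    | (j + 1) =>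
      rw [← ShortComplex.exact_iff_of_iso (ShortComplex.isoMk (Iso.refl _) (Iso.refl _)
        (Iso.refl _) (by simp [hRds]; exact (Category.id_comp _).trans (Category.comp_id _).symm) (by simp [hRds]; exact (Category.id_comp _).trans (Category.comp_id _).symm) :
          (ShortComplex.mk (Q.complex.d (j + 3) (j + 2)) (Q.complex.d (j + 2) (j + 1))
            (Q.complex.d_comp_d _ _ _)) ≅ (R.sc' (j + 3) (j + 2) (j + 1)))]
      exact Q.exact_succ (j + 1)
  · intro k hk
    match k, hk with
    | (j + 1), hk => exact hQ (j + 1) (by omega)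

/-- Schanuel-type lemma: if `W` is a retract of `Z`, `g : P ↠ W` and `g' : E ↠ Z` with
`P`, `E` projective, then `ker g` is a retract of `ker g' ⊞ P`. -/
lemma retract_kernel {W Z E P : D} (s : W ⟶ Z) (r : Z ⟶ W) (hsr : s ≫ r = 𝟙 W)
    [Projective P] [Projective E] (g : P ⟶ W) (g' : E ⟶ Z) [Epi g] [Epi g'] :
    ∃ (u : kernel g ⟶ kernel g' ⊞ P) (v : kernel g' ⊞ P ⟶ kernel g), u ≫ v = 𝟙 _ := by
  let σ : P ⟶ E := Projective.factorThru (g ≫ s) g'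
  have hσ : σ ≫ g' = g ≫ s := Projective.factorThru_comp _ _
  let ρ : E ⟶ P := Projective.factorThru (g' ≫ r) g
  have hρ : ρ ≫ g = g' ≫ r := Projective.factorThru_comp _ _
  let sbar : kernel g ⟶ kernel g' := kernel.lift g' (kernel.ι g ≫ σ)
    (by rw [Category.assoc, hσ, ← Category.assoc, kernel.condition, zero_comp])
  have hsbar : sbar ≫ kernel.ι g' = kernel.ι g ≫ σ := kernel.lift_ι _ _ _
  let rbar : kernel g' ⟶ kernel g := kernel.lift g (kernel.ι g' ≫ ρ)
    (by rw [Category.assoc, hρ, ← Category.assoc, kernel.condition, zero_comp])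
  have hrbar : rbar ≫ kernel.ι g = kernel.ι g' ≫ ρ := kernel.lift_ι _ _ _
  let t : P ⟶ kernel g := kernel.lift g (σ ≫ ρ - 𝟙 P)
    (by rw [Preadditive.sub_comp, Category.assoc, hρ, ← Category.assoc, hσ,
      Category.assoc, hsr, Category.id_comp, Category.comp_id, sub_self])
  have ht : t ≫ kernel.ι g = σ ≫ ρ - 𝟙 P := kernel.lift_ι _ _ _
  refine ⟨biprod.lift sbar (kernel.ι g), biprod.desc rbar (-t), ?_⟩
  rw [biprod.lift_desc, ← cancel_mono (kernel.ι g)]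
  rw [Preadditive.add_comp, Category.assoc, hrbar, Category.assoc,
    Preadditive.neg_comp, ht]
  rw [← Category.assoc, hsbar]
  simp

lemma resLen_retract [EnoughProjectives D] : ∀ (n : ℕ) {Z W : D} (s : W ⟶ Z) (r : Z ⟶ W), s ≫ r = 𝟙 W →
    ResLen Z n → ResLen W n := by
  intro n
  induction n with
  | zero =>
    intro Z W s r hsr hZ
    haveI := projective_of_retract s r hsr (projective_of_resLen_zero hZ)
    exact resLen_of_projective W 0
  | succ n ih =>
    rintro Z W s r hsr ⟨Q, hQ⟩
    haveI := epi_aug Q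
    have hK' : ResLen (kernel (aug Q)) n := resLen_shift Q hQ
    obtain ⟨u, v, huv⟩ := retract_kernel s r hsr (Projective.π W) (aug Q)
    have hsum : ResLen (kernel (aug Q) ⊞ Projective.over W) n := resLen_biprod hK'
    have hΩ : ResLen (kernel (Projective.π W)) n := ih u v huv hsum
    exact resLen_of_kernel_ses (Projective.π W) hΩ

lemma resLen_kernel [EnoughProjectives D] {P X : D} (g : P ⟶ X) [Epi g] [Projective P] {n : ℕ}
    (h : ResLen X (n + 1)) : ResLen (kernel g) n := by
  obtain ⟨Q, hQ⟩ := h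
  haveI := epi_aug Q
  obtain ⟨u, v, huv⟩ := retract_kernel (𝟙 X) (𝟙 X) (Category.id_comp _) g (aug Q)
  exact resLen_retract n u v huv (resLen_biprod (resLen_shift Q hQ))

section RecollementAux

variable {A : Type u₁} {B : Type u₂} {C : Type u₃}
    [Category.{v₁} A] [Category.{v₂} B] [Category.{v₃} C]
    [Abelian A] [Abelian B] [Abelian C]

/-- In a recollement, the unit of the adjunction `(q, i)` is an epimorphism. -/
lemma _root_.Recollement.unit_epi (R : Recollement A B C) (X : B) :
    Epi (R.adj_qi.unit.app X) := by
  letI := R.i_full; letI := R.i_faithful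
  haveI : IsIso R.adj_qi.counit := R.adj_qi.counit_isIso_of_R_fully_faithful
  haveI : PreservesColimitsOfSize.{0, 0} R.e := R.adj_er.leftAdjoint_preservesColimits
  haveI : PreservesColimitsOfSize.{0, 0} R.q := R.adj_qi.leftAdjoint_preservesColimits
  haveI : R.i.IsRightAdjoint := ⟨R.q, ⟨R.adj_qi⟩⟩
  set η := R.adj_qi.unit.app X with hη
  -- the cokernel of the unit lies in the kernel of `e`
  have hzero : IsZero (R.e.obj (cokernel η)) := by
    have h1 : IsZero (R.e.obj ((R.q ⋙ R.i).obj X)) :=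
      (R.essImage_i_eq_ker_e _).1 ⟨R.q.obj X, ⟨Iso.refl _⟩⟩
    have h2 : R.e.map (cokernel.π η) = 0 := h1.eq_of_src _ _
    haveI : Epi (R.e.map (cokernel.π η)) := inferInstance
    rw [IsZero.iff_id_eq_zero, ← cancel_epi (R.e.map (cokernel.π η)), h2]
    simp
  obtain ⟨A₀, ⟨iso⟩⟩ := (R.essImage_i_eq_ker_e _).2 hzero
  -- `q` applied to the unit is an isomorphism
  have h := R.adj_qi.left_triangle_components X
  have h2 : R.adj_qi.counit.app (R.q.obj X) ≫ R.q.map η = 𝟙 _ := by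
    rw [← cancel_mono (R.adj_qi.counit.app (R.q.obj X)), Category.assoc, h]
    simp
  haveI hqη : IsIso (R.q.map η) := ⟨⟨R.adj_qi.counit.app (R.q.obj X), h, h2⟩⟩
  -- hence `q` of the cokernel is zero
  have hz : IsZero (cokernel (R.q.map η)) := by
    rw [IsZero.iff_id_eq_zero, ← cancel_epi (cokernel.π (R.q.map η)),
      cokernel.π_of_epi]
    simp
  have hqc : IsZero (R.q.obj (cokernel η)) := hz.of_iso (PreservesCokernel.iso R.q η)
  -- transfer to `A₀`
  have hA₀ : IsZero A₀ := by
    refine hqc.of_iso ?_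
    exact (asIso (R.adj_qi.counit.app A₀)).symm ≪≫ R.q.mapIso iso
  have hic : IsZero (cokernel η) := (R.i.map_isZero hA₀).of_iso iso.symm
  exact Abelian.epi_of_cokernel_π_eq_zero _ (hic.eq_of_tgt _ _)

end RecollementAux

end PdAux

/-- Let `(𝒜, ℬ, 𝒞)` be a recollement of abelian categories such that `ℬ` has enough
projectives and injectives, and let `m ≥ 1` be an integer.  For `B ∈ ℬ` let `H(B)` denote
the kernel of the unit `η_B : B ⟶ i(q(B))` of the adjunction `(q, i)`.  Then
`pd_ℬ i(P) ≤ m` for every projective object `P` of `𝒜` if and only if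
`pd_ℬ H(P) ≤ m - 1` for every projective object `P` of `ℬ`. -/
theorem recollement_pd_i_le_iff_pd_H_le {A : Type u₁} {B : Type u₂} {C : Type u₃}
    [Category.{v₁} A] [Category.{v₂} B] [Category.{v₃} C]
    [Abelian A] [Abelian B] [Abelian C]
    [EnoughProjectives B] [EnoughInjectives B]
    (R : Recollement A B C) (m : ℕ) (hm : 1 ≤ m) :
    (∀ P : A, Projective P → projDim (R.i.obj P) ≤ (m : ℕ∞)) ↔
    (∀ P : B, Projective P →
      projDim (kernel (R.adj_qi.unit.app P)) ≤ ((m - 1 : ℕ) : ℕ∞)) := by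
  letI := R.i_full; letI := R.i_faithful
  haveI : IsIso R.adj_qi.counit := R.adj_qi.counit_isIso_of_R_fully_faithful
  haveI : PreservesColimitsOfSize.{0, 0} R.q := R.adj_qi.leftAdjoint_preservesColimits
  haveI : PreservesColimitsOfSize.{0, 0} R.i := R.adj_ip.leftAdjoint_preservesColimits
  obtain ⟨n, rfl⟩ : ∃ n, m = n + 1 := ⟨m - 1, by omega⟩
  have hsub : (n + 1) - 1 = n := by omega
  constructor
  · intro h P hP
    haveI : Projective P := hP
    haveI : Epi (R.adj_qi.unit.app P) := R.unit_epi P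
    haveI : Projective ((𝟭 B).obj P) := hP
    have hqP : Projective (R.q.obj P) := R.adj_qi.map_projective P hP
    have h1 : PdAux.ResLen ((R.q ⋙ R.i).obj P) (n + 1) :=
      PdAux.projDim_le_iff.1 (h (R.q.obj P) hqP)
    rw [hsub, PdAux.projDim_le_iff]
    exact PdAux.resLen_kernel (R.adj_qi.unit.app P) h1
  · intro h P hP
    haveI : Projective P := hP
    set Q := Projective.over (R.i.obj P) with hQdef
    haveI : Epi (R.adj_qi.unit.app Q) := R.unit_epi Q
    haveI : Projective ((𝟭 B).obj Q) := Projective.projective_over _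
    have hK : PdAux.ResLen (kernel (R.adj_qi.unit.app Q)) n := by
      have := PdAux.projDim_le_iff.1 (h Q (Projective.projective_over _))
      rwa [hsub] at this
    have h2 : PdAux.ResLen ((R.q ⋙ R.i).obj Q) (n + 1) :=
      PdAux.resLen_of_kernel_ses (R.adj_qi.unit.app Q) hK
    haveI hmap : Epi (R.q.map (Projective.π (R.i.obj P)) ≫ R.adj_qi.counit.app P) :=
      epi_comp _ _
    let σ : R.i.obj P ⟶ (R.q ⋙ R.i).obj Q :=
      R.i.map (Projective.factorThru (𝟙 P)
        (R.q.map (Projective.π (R.i.obj P)) ≫ R.adj_qi.counit.app P))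
    let ρ : (R.q ⋙ R.i).obj Q ⟶ R.i.obj P :=
      R.i.map (R.q.map (Projective.π (R.i.obj P)) ≫ R.adj_qi.counit.app P)
    have hσρ : σ ≫ ρ = 𝟙 _ := by
      dsimp only [σ, ρ]
      rw [← CategoryTheory.Functor.map_comp, Projective.factorThru_comp,
        CategoryTheory.Functor.map_id]
    rw [PdAux.projDim_le_iff]
    exact PdAux.resLen_retract (n + 1) σ ρ hσρ h2
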